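/- Suppose probability densities π₀, ..., π_M on ℝ^d are given by π_ℓ = f_ℓ/Z_ℓ with f_ℓ > 0 measurable and Z_ℓ = ∫ f_ℓ, and suppose transition kernels F₁, ..., F_M are such that π_ℓ is invariant for F_ℓ and F_ℓ(x,·) is absolutely continuous with positive density. Define the forward path measure P⃗(x_{0:M}) = π₀(x₀)∏_{ℓ=1}^M F_ℓ(x_{ℓ-1}, x_ℓ) and the work W(x_{0:M}) = Σ_{ℓ=0}^{M-1} log(f_ℓ(x_ℓ)/f_{ℓ+1}(x_ℓ)). Then E_{P⃗}[exp(-W)] = Z_M/Z₀. -/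

import Mathlib

open MeasureTheory

set_option maxHeartbeats 1000000

private abbrev AisE (d : ℕ) := EuclideanSpace ℝ (Fin d)

private lemma ais_aux (d : ℕ) : ∀ (n : ℕ)
    (π : Fin (n + 1) → AisE d → ℝ),
    (∀ ℓ, Measurable (π ℓ)) → (∀ ℓ x, 0 < π ℓ x) →
    (∫ x, π (Fin.last n) x) = 1 →
    ∀ (F : Fin n → AisE d → AisE d → ℝ),
    (∀ ℓ, Measurable (Function.uncurry (F ℓ))) → (∀ ℓ x y, 0 ≤ F ℓ x y) →
    (∀ ℓ y, ∫ x, F ℓ x y * π ℓ.succ x = π ℓ.succ y) →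
    ∫⁻ x : Fin (n + 1) → AisE d, ENNReal.ofReal
      (π 0 (x 0) * ∏ ℓ : Fin n, (π ℓ.succ (x ℓ.castSucc) / π ℓ.castSucc (x ℓ.castSucc) *
        F ℓ (x ℓ.castSucc) (x ℓ.succ))) = 1 := by
  intro n
  induction n with
  | zero =>
    intro π hmeas hpos hlast F _ _ _
    have hInt : Integrable (π 0) := by
      by_contra h
      rw [show (Fin.last 0) = 0 from rfl, integral_undef h] at hlast
      exact one_ne_zero hlast.symm
    have h1 : ∫⁻ x : Fin 1 → AisE d, ENNReal.ofReal (π 0 (x 0))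
        = ∫⁻ y : AisE d, ENNReal.ofReal (π 0 y) := by
      rw [← (volume_preserving_funUnique (Fin 1) (AisE d)).lintegral_comp_emb
        (MeasurableEquiv.funUnique _ _).measurableEmbedding
        (fun y => ENNReal.ofReal (π 0 y))]
      rfl
    simp only [Finset.univ_eq_empty, Finset.prod_empty, mul_one]
    rw [h1, ← ofReal_integral_eq_lintegral_ofReal hInt
      (Filter.Eventually.of_forall fun x => (hpos 0 x).le)]
    rw [show (0 : Fin 1) = Fin.last 0 from rfl, hlast]
    exact ENNReal.ofReal_one
  | succ n ih =>
    intro π hmeas hpos hlast F hFmeas hFnn hFinv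
    set π' : Fin (n + 1) → AisE d → ℝ := fun ℓ => π ℓ.succ with hπ'
    set F' : Fin n → AisE d → AisE d → ℝ := fun ℓ => F ℓ.succ with hF'
    set P : (Fin (n + 1) → AisE d) → ℝ := fun y =>
      ∏ ℓ : Fin n, (π' ℓ.succ (y ℓ.castSucc) / π' ℓ.castSucc (y ℓ.castSucc) *
        F' ℓ (y ℓ.castSucc) (y ℓ.succ)) with hP
    have hPnn : ∀ y, 0 ≤ P y := fun y =>
      Finset.prod_nonneg fun ℓ _ => mul_nonneg
        (div_nonneg (hpos _ _).le (hpos _ _).le) (hFnn _ _ _)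
    have hPmeas : Measurable P := by
      apply Finset.measurable_prod
      intro ℓ _
      have ha : ∀ k : Fin (n + 1), Measurable fun y : Fin (n + 1) → AisE d => y k :=
        fun k => measurable_pi_apply k
      apply Measurable.mul
      · exact ((hmeas ℓ.succ.succ).comp (ha ℓ.castSucc)).div
          ((hmeas ℓ.castSucc.succ).comp (ha ℓ.castSucc))
      · exact (hFmeas ℓ.succ).comp ((ha ℓ.castSucc).prodMk (ha ℓ.succ))
    set g : AisE d × (Fin (n + 1) → AisE d) → ENNReal := fun q =>
      ENNReal.ofReal (π (Fin.succ 0) q.1 * F 0 q.1 (q.2 0)) * ENNReal.ofReal (P q.2) with hg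
    have hgmeas : Measurable g := by
      apply Measurable.fun_mul
      · apply ENNReal.measurable_ofReal.comp
        apply Measurable.fun_mul
        · exact (hmeas _).comp measurable_fst
        · exact (hFmeas 0).comp
            (measurable_fst.prodMk ((measurable_pi_apply 0).comp measurable_snd))
      · exact ENNReal.measurable_ofReal.comp (hPmeas.comp measurable_snd)
    set e := MeasurableEquiv.piFinSuccAbove (fun _ : Fin (n + 2) => AisE d) 0 with he
    -- pointwise identity
    have hpt : ∀ x : Fin (n + 2) → AisE d,
        ENNReal.ofReal (π 0 (x 0) *
          ∏ ℓ : Fin (n + 1), (π ℓ.succ (x ℓ.castSucc) / π ℓ.castSucc (x ℓ.castSucc) *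
            F ℓ (x ℓ.castSucc) (x ℓ.succ))) = g (e x) := by
      intro x
      have hex : e x = (x 0, fun j : Fin (n + 1) => x j.succ) := by
        rw [he]
        simp only [MeasurableEquiv.piFinSuccAbove_apply]
        rw [Fin.insertNthEquiv_zero]
        rfl
      rw [hex, hg]
      simp only
      have hmain : π 0 (x 0) *
          ∏ ℓ : Fin (n + 1), (π ℓ.succ (x ℓ.castSucc) / π ℓ.castSucc (x ℓ.castSucc) *
            F ℓ (x ℓ.castSucc) (x ℓ.succ))
          = (π (Fin.succ 0) (x 0) * F 0 (x 0) (x (Fin.succ (0 : Fin (n + 1))))) *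
            P (fun j : Fin (n + 1) => x j.succ) := by
        rw [Fin.prod_univ_succ]
        have hprodeq : ∏ ℓ : Fin n,
            (π ℓ.succ.succ (x ℓ.succ.castSucc) / π ℓ.succ.castSucc (x ℓ.succ.castSucc) *
              F ℓ.succ (x ℓ.succ.castSucc) (x ℓ.succ.succ))
            = P (fun j : Fin (n + 1) => x j.succ) := by
          apply Finset.prod_congr rfl
          intro ℓ _
          rw [show ℓ.succ.castSucc = ℓ.castSucc.succ from (Fin.succ_castSucc ℓ).symm]
        rw [hprodeq]
        have h0 : π 0 (x 0) ≠ 0 := (hpos 0 (x 0)).ne'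
        rw [show ((0 : Fin (n + 1)).castSucc) = (0 : Fin (n + 2)) from rfl]
        field_simp
        try ring
      rw [hmain, ENNReal.ofReal_mul (mul_nonneg (hpos _ _).le (hFnn _ _ _))]
    have hmp := (volume_preserving_piFinSuccAbove (fun _ : Fin (n + 2) => AisE d) 0)
    calc
      ∫⁻ x : Fin (n + 2) → AisE d, ENNReal.ofReal
          (π 0 (x 0) * ∏ ℓ : Fin (n + 1),
            (π ℓ.succ (x ℓ.castSucc) / π ℓ.castSucc (x ℓ.castSucc) *
              F ℓ (x ℓ.castSucc) (x ℓ.succ)))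
          = ∫⁻ x : Fin (n + 2) → AisE d, g (e x) := lintegral_congr hpt
      _ = ∫⁻ q, g q := hmp.lintegral_comp_emb e.measurableEmbedding g
      _ = ∫⁻ q, g q ∂((volume : Measure (AisE d)).prod
            (volume : Measure (Fin (n + 1) → AisE d))) := by
          rw [← Measure.volume_eq_prod]
      _ = ∫⁻ y, ∫⁻ a, g (a, y) := lintegral_prod_symm g hgmeas.aemeasurable
      _ = ∫⁻ y : Fin (n + 1) → AisE d,
            ENNReal.ofReal (π (Fin.succ 0) (y 0)) * ENNReal.ofReal (P y) := by
          apply lintegral_congr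
          intro y
          rw [hg]
          simp only
          rw [lintegral_mul_const' _ _ ENNReal.ofReal_ne_top]
          congr 1
          have hint := hFinv 0 (y 0)
          have hpos1 := hpos (Fin.succ 0) (y 0)
          have hInt : Integrable (fun x => F 0 x (y 0) *
              π (Fin.succ (0 : Fin (n + 1))) x) := by
            by_contra h
            rw [integral_undef h] at hint
            exact absurd hint.symm (ne_of_gt hpos1)
          have h1 : ∀ a : AisE d, π (Fin.succ (0 : Fin (n + 1))) a * F 0 a (y 0)
              = F 0 a (y 0) * π (Fin.succ (0 : Fin (n + 1))) a := fun a => mul_comm _ _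
          simp only [h1]
          rw [← ofReal_integral_eq_lintegral_ofReal hInt
            (Filter.Eventually.of_forall fun a => mul_nonneg (hFnn _ _ _) (hpos _ _).le), hint]
      _ = ∫⁻ y : Fin (n + 1) → AisE d, ENNReal.ofReal (π' 0 (y 0) *
            ∏ ℓ : Fin n, (π' ℓ.succ (y ℓ.castSucc) / π' ℓ.castSucc (y ℓ.castSucc) *
              F' ℓ (y ℓ.castSucc) (y ℓ.succ))) := by
          apply lintegral_congr
          intro y
          rw [← ENNReal.ofReal_mul (hpos _ _).le]
      _ = 1 := by
          apply ih π' (fun ℓ => hmeas ℓ.succ) (fun ℓ x => hpos ℓ.succ x) ?_ F'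
            (fun ℓ => hFmeas ℓ.succ) (fun ℓ x y => hFnn ℓ.succ x y)
            (fun ℓ y => hFinv ℓ.succ y)
          have hls : π' (Fin.last n) = π (Fin.last (n + 1)) := by
            rw [hπ']
            simp [Fin.succ_last]
          rw [hls]
          exact hlast

/-- Annealed importance sampling identity (Neal 2001): given positive unnormalized densities
`f_0, ..., f_M` on `ℝ^d` with normalizing constants `Z_ℓ`, and transition kernels
`F_1, ..., F_M` leaving the corresponding normalized densities invariant, the forward path
measure `P⃗(x_{0:M}) = π₀(x₀)∏_ℓ F_ℓ(x_{ℓ-1}, x_ℓ)` and the work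
`W(x_{0:M}) = Σ_{ℓ<M} log(f_ℓ(x_ℓ)/f_{ℓ+1}(x_ℓ))` satisfy
`E_{P⃗}[exp(-W)] = Z_M / Z_0`. -/
theorem ais_identity (d M : ℕ)
    (f : Fin (M + 1) → EuclideanSpace ℝ (Fin d) → ℝ)
    (hf_pos : ∀ ℓ x, 0 < f ℓ x) (hf_meas : ∀ ℓ, Measurable (f ℓ))
    (Z : Fin (M + 1) → ℝ) (hZ : ∀ ℓ, Z ℓ = ∫ x, f ℓ x) (hZ_pos : ∀ ℓ, 0 < Z ℓ)
    (F : Fin M → EuclideanSpace ℝ (Fin d) → EuclideanSpace ℝ (Fin d) → ℝ)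
    (hF_meas : ∀ ℓ, Measurable (Function.uncurry (F ℓ)))
    (hF_pos : ∀ ℓ x y, 0 < F ℓ x y)
    (hF_kernel : ∀ ℓ x, ∫ y, F ℓ x y = 1)
    (hF_inv : ∀ ℓ y, ∫ x, F ℓ x y * (f ℓ.succ x / Z ℓ.succ) = f ℓ.succ y / Z ℓ.succ)
    (W : (Fin (M + 1) → EuclideanSpace ℝ (Fin d)) → ℝ)
    (hW : ∀ x, W x = ∑ ℓ : Fin M,
      Real.log (f ℓ.castSucc (x ℓ.castSucc) / f ℓ.succ (x ℓ.castSucc)))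
    (p : (Fin (M + 1) → EuclideanSpace ℝ (Fin d)) → ℝ)
    (hp : ∀ x, p x = (f 0 (x 0) / Z 0) * ∏ ℓ : Fin M, F ℓ (x ℓ.castSucc) (x ℓ.succ)) :
    ∫⁻ x, ENNReal.ofReal (Real.exp (-(W x)) * p x) =
      ENNReal.ofReal (Z (Fin.last M) / Z 0) := by
  set π : Fin (M + 1) → EuclideanSpace ℝ (Fin d) → ℝ := fun ℓ x => f ℓ x / Z ℓ with hπ
  have hπ_pos : ∀ ℓ x, 0 < π ℓ x := fun ℓ x => div_pos (hf_pos ℓ x) (hZ_pos ℓ)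
  have hZne : ∀ ℓ, Z ℓ ≠ 0 := fun ℓ => (hZ_pos ℓ).ne'
  -- telescoping
  have htel : ∏ ℓ : Fin M, (Z ℓ.succ / Z ℓ.castSucc) = Z (Fin.last M) / Z 0 := by
    rw [Finset.prod_div_distrib]
    have h1 : ∏ ℓ : Fin M, Z ℓ.succ = (∏ ℓ : Fin (M + 1), Z ℓ) / Z 0 := by
      rw [Fin.prod_univ_succ, mul_div_cancel_left₀ _ (hZne 0)]
    have h2 : ∏ ℓ : Fin M, Z ℓ.castSucc = (∏ ℓ : Fin (M + 1), Z ℓ) / Z (Fin.last M) := by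
      rw [Fin.prod_univ_castSucc, mul_div_cancel_right₀ _ (hZne _)]
    have hT : (∏ ℓ : Fin (M + 1), Z ℓ) ≠ 0 :=
      Finset.prod_ne_zero_iff.2 fun ℓ _ => hZne ℓ
    rw [h1, h2, div_div_div_comm, div_self hT, one_div, inv_div]
  have hc : (0 : ℝ) ≤ Z (Fin.last M) / Z 0 :=
    (div_pos (hZ_pos _) (hZ_pos _)).le
  -- pointwise identity
  have key : ∀ x : Fin (M + 1) → EuclideanSpace ℝ (Fin d), Real.exp (-(W x)) * p x
      = (Z (Fin.last M) / Z 0) * (π 0 (x 0) *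
        ∏ ℓ : Fin M, (π ℓ.succ (x ℓ.castSucc) / π ℓ.castSucc (x ℓ.castSucc) *
          F ℓ (x ℓ.castSucc) (x ℓ.succ))) := by
    intro x
    have hexp : Real.exp (-(W x)) =
        ∏ ℓ : Fin M, (f ℓ.succ (x ℓ.castSucc) / f ℓ.castSucc (x ℓ.castSucc)) := by
      rw [hW, ← Finset.sum_neg_distrib, Real.exp_sum]
      apply Finset.prod_congr rfl
      intro ℓ _
      rw [Real.exp_neg, Real.exp_log (div_pos (hf_pos _ _) (hf_pos _ _)), inv_div]
    have hterm : ∀ ℓ : Fin M,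
        f ℓ.succ (x ℓ.castSucc) / f ℓ.castSucc (x ℓ.castSucc)
          = (Z ℓ.succ / Z ℓ.castSucc) *
            (π ℓ.succ (x ℓ.castSucc) / π ℓ.castSucc (x ℓ.castSucc)) := by
      intro ℓ
      rw [hπ]
      have h1 := (hf_pos ℓ.castSucc (x ℓ.castSucc)).ne'
      have h2 := hZne ℓ.succ
      have h3 := hZne ℓ.castSucc
      field_simp
    rw [hexp, hp]
    calc (∏ ℓ : Fin M, (f ℓ.succ (x ℓ.castSucc) / f ℓ.castSucc (x ℓ.castSucc))) *
          ((f 0 (x 0) / Z 0) * ∏ ℓ : Fin M, F ℓ (x ℓ.castSucc) (x ℓ.succ))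
        = (f 0 (x 0) / Z 0) *
          ((∏ ℓ : Fin M, (f ℓ.succ (x ℓ.castSucc) / f ℓ.castSucc (x ℓ.castSucc))) *
            ∏ ℓ : Fin M, F ℓ (x ℓ.castSucc) (x ℓ.succ)) := by ring
      _ = (f 0 (x 0) / Z 0) *
          ∏ ℓ : Fin M, ((Z ℓ.succ / Z ℓ.castSucc) *
            (π ℓ.succ (x ℓ.castSucc) / π ℓ.castSucc (x ℓ.castSucc)) *
            F ℓ (x ℓ.castSucc) (x ℓ.succ)) := by
          rw [← Finset.prod_mul_distrib]
          congr 1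
          apply Finset.prod_congr rfl
          intro ℓ _
          rw [hterm ℓ]
      _ = (f 0 (x 0) / Z 0) * ((∏ ℓ : Fin M, (Z ℓ.succ / Z ℓ.castSucc)) *
            ∏ ℓ : Fin M, (π ℓ.succ (x ℓ.castSucc) / π ℓ.castSucc (x ℓ.castSucc) *
              F ℓ (x ℓ.castSucc) (x ℓ.succ))) := by
          rw [← Finset.prod_mul_distrib]
          congr 1
          apply Finset.prod_congr rfl
          intro ℓ _
          ring
      _ = (Z (Fin.last M) / Z 0) * (π 0 (x 0) *
            ∏ ℓ : Fin M, (π ℓ.succ (x ℓ.castSucc) / π ℓ.castSucc (x ℓ.castSucc) *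
              F ℓ (x ℓ.castSucc) (x ℓ.succ))) := by
          rw [htel, hπ]
          ring
  -- apply the auxiliary lemma
  have haux := ais_aux d M π (fun ℓ => (hf_meas ℓ).div_const _) hπ_pos ?_ F hF_meas
    (fun ℓ x y => (hF_pos ℓ x y).le) (fun ℓ y => hF_inv ℓ y)
  · calc ∫⁻ x, ENNReal.ofReal (Real.exp (-(W x)) * p x)
        = ∫⁻ x : Fin (M + 1) → EuclideanSpace ℝ (Fin d), ENNReal.ofReal (Z (Fin.last M) / Z 0) *
          ENNReal.ofReal (π 0 (x 0) *
            ∏ ℓ : Fin M, (π ℓ.succ (x ℓ.castSucc) / π ℓ.castSucc (x ℓ.castSucc) *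
              F ℓ (x ℓ.castSucc) (x ℓ.succ))) := by
          apply lintegral_congr
          intro x
          rw [key x, ENNReal.ofReal_mul hc]
      _ = ENNReal.ofReal (Z (Fin.last M) / Z 0) := by
          rw [lintegral_const_mul' _ _ ENNReal.ofReal_ne_top, haux, mul_one]
  · rw [hπ]
    simp only
    rw [integral_div, ← hZ, div_self (hZne _)]
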